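/- There exist constants 0 < c₁ ≤ c₂ such that for every x ∈ ℝ³ with |x| ≥ 2, the integral D(x) = ∫_{{y ∈ ℝ³ : |y| > 1}} |x−y|⁻² |y|⁻³ dy satisfies c₁·|x|⁻²·log|x| ≤ D(x) ≤ c₂·|x|⁻²·log|x|. -/

import Mathlib

noncomputable section

open MeasureTheory Set Metric Measure Real
open scoped ENNReal

/-- Euclidean 3-space. -/
abbrev E3 := EuclideanSpace ℝ (Fin 3)

namespace InteractionAux

variable {E : Type*} [NormedAddCommGroup E] [NormedSpace ℝ E]
  [MeasurableSpace E] [BorelSpace E] [Nontrivial E] (μ : Measure E)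
  [FiniteDimensional ℝ E] [μ.IsAddHaarMeasure]

local notation "dim" => Module.finrank ℝ

lemma lintegral_fun_norm_addHaar' (f : ℝ → ℝ≥0∞) (hf : Measurable f) :
    ∫⁻ x, f ‖x‖ ∂μ = (dim E) * (μ (ball 0 1)) *
      ∫⁻ y in Set.Ioi (0 : ℝ), ENNReal.ofReal (y ^ (dim E - 1)) * f y := by
  have h1 : ∫⁻ x, f ‖x‖ ∂μ = ∫⁻ x : ({(0:E)}ᶜ : Set E), f ‖x.1‖ ∂(μ.comap (↑)) := by
    rw [lintegral_subtype_comap (measurableSet_singleton _).compl fun x ↦ f (‖x‖),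
      restrict_compl_singleton]
  have hm : Measurable (fun p : sphere (0:E) 1 × Set.Ioi (0:ℝ) => f p.2) :=
    hf.comp (measurable_subtype_coe.comp measurable_snd)
  have h2 := (μ.measurePreserving_homeomorphUnitSphereProd).lintegral_comp hm
  have h4 : ∫⁻ p : sphere (0:E) 1 × Set.Ioi (0:ℝ), f p.2
        ∂(μ.toSphere.prod (volumeIoiPow (dim E - 1)))
      = μ.toSphere univ * ∫⁻ r : Set.Ioi (0:ℝ), f r ∂(volumeIoiPow (dim E - 1)) := by
    rw [lintegral_prod _ hm.aemeasurable]
    simp [lintegral_const, mul_comm]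
  have h5 : ∫⁻ r : Set.Ioi (0:ℝ), f r ∂(volumeIoiPow (dim E - 1))
      = ∫⁻ y in Set.Ioi (0 : ℝ), ENNReal.ofReal (y ^ (dim E - 1)) * f y := by
    rw [Measure.volumeIoiPow]
    exact (lintegral_withDensity_eq_lintegral_mul (Measure.comap Subtype.val volume)
      (f := fun r : Set.Ioi (0:ℝ) => ENNReal.ofReal (r.1 ^ (dim E - 1)))
      ((measurable_subtype_coe.pow_const _).ennreal_ofReal)
      (hf.comp measurable_subtype_coe)).trans
      (lintegral_subtype_comap measurableSet_Ioi
        (fun y => ENNReal.ofReal (y ^ (dim E - 1)) * f y))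
  have h3 : (fun x : ({(0:E)}ᶜ : Set E) => f ‖x.1‖)
      = fun a => f ((homeomorphUnitSphereProd E) a).2 := by
    funext a; simp [homeomorphUnitSphereProd]
  rw [h1, h3, h2, h4, h5, toSphere_apply_univ]

/-- The volume of the unit ball in `E3`. -/
def Vb : ℝ≥0∞ := volume (ball (0:E3) 1)

lemma Vb_ne_top : Vb ≠ ⊤ := measure_ball_lt_top.ne

lemma Vb_pos : 0 < Vb := measure_ball_pos _ _ one_pos

/-- Polar coordinates in `E3` for radial functions. -/
lemma polar3 (f : ℝ → ℝ≥0∞) (hf : Measurable f) :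
    ∫⁻ y : E3, f ‖y‖ = 3 * Vb *
      ∫⁻ r in Set.Ioi (0 : ℝ), ENNReal.ofReal (r ^ 2) * f r := by
  have h := lintegral_fun_norm_addHaar' (volume : Measure E3) f hf
  have hd : Module.finrank ℝ E3 = 3 := by simp [finrank_euclideanSpace]
  rw [hd] at h
  simpa [Vb] using h

/-- Polar coordinates for radial functions over a radial set. -/
lemma polar3_set (s : Set ℝ) (hs : MeasurableSet s) (f : ℝ → ℝ≥0∞) (hf : Measurable f) :
    ∫⁻ y : E3 in {y | ‖y‖ ∈ s}, f ‖y‖ = 3 * Vb *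
      ∫⁻ r in s ∩ Set.Ioi (0 : ℝ), ENNReal.ofReal (r ^ 2) * f r := by
  have h := polar3 (s.indicator f) (hf.indicator hs)
  have hL : ∫⁻ y : E3, s.indicator f ‖y‖
      = ∫⁻ y : E3 in {y | ‖y‖ ∈ s}, f ‖y‖ := by
    have hpre : MeasurableSet ((fun y : E3 => ‖y‖) ⁻¹' s) := measurable_norm hs
    rw [show {y : E3 | ‖y‖ ∈ s} = (fun y : E3 => ‖y‖) ⁻¹' s from rfl,
      ← lintegral_indicator hpre]
    refine lintegral_congr fun y => ?_
    by_cases hy : ‖y‖ ∈ s <;> simp [Set.indicator, hy]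
  have hR : ∫⁻ r in Set.Ioi (0:ℝ), ENNReal.ofReal (r ^ 2) * s.indicator f r
      = ∫⁻ r in s ∩ Set.Ioi (0 : ℝ), ENNReal.ofReal (r ^ 2) * f r := by
    have : ∀ r : ℝ, ENNReal.ofReal (r ^ 2) * s.indicator f r
        = s.indicator (fun r => ENNReal.ofReal (r ^ 2) * f r) r := by
      intro r; by_cases hr : r ∈ s <;> simp [Set.indicator, hr]
    simp_rw [this]
    rw [lintegral_indicator hs, Measure.restrict_restrict hs]
  rw [hL, hR] at h
  exact h

lemma lint_annulus {a b : ℝ} (ha : 0 < a) (hab : a < b) :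
    ∫⁻ y : E3 in {y | ‖y‖ ∈ Set.Ioo a b}, ENNReal.ofReal ((‖y‖ ^ 3)⁻¹)
      = 3 * Vb * ENNReal.ofReal (Real.log b - Real.log a) := by
  have hmeas : Measurable fun r : ℝ => ENNReal.ofReal ((r ^ 3)⁻¹) :=
    ((measurable_id.pow_const 3).inv).ennreal_ofReal
  rw [polar3_set _ measurableSet_Ioo _ hmeas]
  have hinter : Set.Ioo a b ∩ Set.Ioi 0 = Set.Ioo a b :=
    inter_eq_left.2 fun r hr => ha.trans hr.1
  rw [hinter]
  congr 1
  have hcg : ∫⁻ r in Set.Ioo a b, ENNReal.ofReal (r ^ 2) * ENNReal.ofReal ((r ^ 3)⁻¹)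
      = ∫⁻ r in Set.Ioo a b, ENNReal.ofReal r⁻¹ := by
    refine setLIntegral_congr_fun measurableSet_Ioo (fun r hr => ?_)
    have hr0 : 0 < r := ha.trans hr.1
    rw [← ENNReal.ofReal_mul (by positivity)]
    congr 1
    field_simp
  rw [hcg, setLIntegral_congr Ioo_ae_eq_Ioc]
  have hii : IntervalIntegrable (fun r : ℝ => r⁻¹) volume a b := by
    apply intervalIntegral.intervalIntegrable_inv (f := fun r : ℝ => r)
    · intro x hx
      have := hx.1
      have : (0:ℝ) < x := lt_of_lt_of_le (lt_min ha (ha.trans hab)) hx.1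
      exact this.ne'
    · exact continuousOn_id
  have hint : IntegrableOn (fun r : ℝ => r⁻¹) (Set.Ioc a b) := by
    simpa [hab.le] using hii.1
  rw [← ofReal_integral_eq_lintegral_ofReal hint ?nn]
  case nn =>
    filter_upwards [ae_restrict_mem measurableSet_Ioc] with r hr
    exact inv_nonneg.2 (ha.trans hr.1).le
  congr 1
  rw [← intervalIntegral.integral_of_le hab.le, integral_inv_of_pos ha (ha.trans hab),
    Real.log_div (ha.trans hab).ne' ha.ne']

lemma lint_ball (x : E3) {r : ℝ} (hr : 0 ≤ r) :
    ∫⁻ y : E3 in ball x r, ENNReal.ofReal ((‖x - y‖ ^ 2)⁻¹)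
      = 3 * Vb * ENNReal.ofReal r := by
  -- translate to a ball centered at the origin
  have hind : ∀ y : E3, (ball x r).indicator
        (fun y => ENNReal.ofReal ((‖x - y‖ ^ 2)⁻¹)) y
      = (ball (0:E3) r).indicator (fun z => ENNReal.ofReal ((‖z‖ ^ 2)⁻¹)) (y - x) := by
    intro y
    have hmem : y ∈ ball x r ↔ y - x ∈ ball (0:E3) r := by
      simp [mem_ball, dist_eq_norm]
    by_cases hy : y ∈ ball x r
    · rw [Set.indicator_of_mem hy, Set.indicator_of_mem (hmem.1 hy)]
      rw [norm_sub_rev]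
    · rw [Set.indicator_of_notMem hy, Set.indicator_of_notMem (fun h => hy (hmem.2 h))]
  have hmeas0 : Measurable fun z : E3 => ENNReal.ofReal ((‖z‖ ^ 2)⁻¹) :=
    ((measurable_norm.pow_const 2).inv).ennreal_ofReal
  calc ∫⁻ y : E3 in ball x r, ENNReal.ofReal ((‖x - y‖ ^ 2)⁻¹)
      = ∫⁻ y : E3, (ball x r).indicator (fun y => ENNReal.ofReal ((‖x - y‖ ^ 2)⁻¹)) y := by
        rw [lintegral_indicator measurableSet_ball]
    _ = ∫⁻ y : E3, (ball (0:E3) r).indicator (fun z => ENNReal.ofReal ((‖z‖ ^ 2)⁻¹)) (y - x) := by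
        simp_rw [hind]
    _ = ∫⁻ z : E3, (ball (0:E3) r).indicator (fun z => ENNReal.ofReal ((‖z‖ ^ 2)⁻¹)) z :=
        lintegral_sub_right_eq_self _ x
    _ = ∫⁻ z : E3 in ball (0:E3) r, ENNReal.ofReal ((‖z‖ ^ 2)⁻¹) := by
        rw [lintegral_indicator measurableSet_ball]
    _ = 3 * Vb * ENNReal.ofReal r := by
        have hset : ball (0:E3) r = {y : E3 | ‖y‖ ∈ Set.Iio r} := by
          ext z; simp [mem_ball, dist_eq_norm]
        have hm2 : Measurable fun t : ℝ => ENNReal.ofReal ((t ^ 2)⁻¹) :=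
          (measurable_id.pow_const 2).inv.ennreal_ofReal
        rw [hset, polar3_set _ measurableSet_Iio _ hm2]
        congr 1
        have h1 : Set.Iio r ∩ Set.Ioi (0:ℝ) = Set.Ioo 0 r := by
          ext t; simp [Set.mem_Ioo, and_comm]
        rw [h1]
        have hcg : ∫⁻ t in Set.Ioo (0:ℝ) r, ENNReal.ofReal (t ^ 2) * ENNReal.ofReal ((t ^ 2)⁻¹)
            = ∫⁻ t in Set.Ioo (0:ℝ) r, 1 := by
          refine setLIntegral_congr_fun measurableSet_Ioo (fun t ht => ?_)
          rw [← ENNReal.ofReal_mul (by positivity)]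
          rw [mul_inv_cancel₀ (pow_ne_zero 2 (ne_of_gt ht.1))]
          simp
        rw [hcg]
        simp [Real.volume_Ioo, hr]

lemma lint_tail {c : ℝ} (hc : 0 < c) :
    ∫⁻ y : E3 in {y | ‖y‖ ∈ Set.Ici c}, ENNReal.ofReal ((‖y‖ ^ 5)⁻¹)
      = 3 * Vb * ENNReal.ofReal ((c ^ 2)⁻¹ / 2) := by
  have hmeas : Measurable fun r : ℝ => ENNReal.ofReal ((r ^ 5)⁻¹) :=
    ((measurable_id.pow_const 5).inv).ennreal_ofReal
  rw [polar3_set _ measurableSet_Ici _ hmeas]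
  have hinter : Set.Ici c ∩ Set.Ioi 0 = Set.Ici c :=
    inter_eq_left.2 fun r hr => hc.trans_le hr
  rw [hinter]
  congr 1
  rw [setLIntegral_congr (Ioi_ae_eq_Ici (μ := volume) (a := c)).symm]
  have hcg : ∫⁻ t in Set.Ioi c, ENNReal.ofReal (t ^ 2) * ENNReal.ofReal ((t ^ 5)⁻¹)
      = ∫⁻ t in Set.Ioi c, ENNReal.ofReal (t ^ (-3 : ℝ)) := by
    refine setLIntegral_congr_fun measurableSet_Ioi (fun t ht => ?_)
    have ht0 : 0 < t := hc.trans ht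
    rw [← ENNReal.ofReal_mul (by positivity)]
    congr 1
    rw [show (-3:ℝ) = -((3:ℕ):ℝ) by norm_num, Real.rpow_neg ht0.le, Real.rpow_natCast]
    field_simp
  rw [hcg]
  have hint : IntegrableOn (fun t : ℝ => t ^ (-3 : ℝ)) (Set.Ioi c) :=
    integrableOn_Ioi_rpow_of_lt (by norm_num) hc
  rw [← ofReal_integral_eq_lintegral_ofReal hint ?nn2]
  case nn2 =>
    filter_upwards [ae_restrict_mem measurableSet_Ioi] with t ht
    exact Real.rpow_nonneg (hc.trans ht).le _
  rw [integral_Ioi_rpow_of_lt (by norm_num) hc]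
  congr 1
  rw [show (-3 : ℝ) + 1 = -2 by norm_num]
  rw [Real.rpow_neg hc.le, Real.rpow_two]
  ring

/-- Normalizing constant: volume of unit ball as a real number. -/
def v : ℝ := Vb.toReal

lemma v_pos : 0 < v := ENNReal.toReal_pos Vb_pos.ne' Vb_ne_top

lemma v_nonneg : 0 ≤ v := v_pos.le

lemma three_Vb_ofReal {t : ℝ} (ht : 0 ≤ t) :
    3 * Vb * ENNReal.ofReal t = ENNReal.ofReal (3 * v * t) := by
  have h : (3:ℝ≥0∞) * Vb = ENNReal.ofReal (3 * v) := by
    rw [ENNReal.ofReal_mul (by norm_num : (0:ℝ) ≤ 3)]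
    congr 1
    · simp
    · exact (ENNReal.ofReal_toReal Vb_ne_top).symm
  rw [h, ← ENNReal.ofReal_mul (mul_nonneg (by norm_num) v_nonneg)]

lemma lint_const_mul_ofReal {c : ℝ} (hc : 0 ≤ c) {g : E3 → ℝ} (hg : Measurable g)
    (s : Set E3) :
    ∫⁻ y in s, ENNReal.ofReal (c * g y) = ENNReal.ofReal c * ∫⁻ y in s, ENNReal.ofReal (g y) := by
  simp_rw [ENNReal.ofReal_mul hc]
  exact lintegral_const_mul _ hg.ennreal_ofReal

lemma fmeas (x : E3) : Measurable fun y : E3 => (‖x - y‖ ^ 2)⁻¹ * (‖y‖ ^ 3)⁻¹ :=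
  (((measurable_id'.const_sub x).norm.pow_const 2).inv).mul
    ((measurable_norm.pow_const 3).inv)

lemma S_meas : MeasurableSet {y : E3 | 1 < ‖y‖} :=
  (isOpen_lt continuous_const continuous_norm).measurableSet

lemma lower_bound (x : E3) (hx : 2 ≤ ‖x‖) :
    ENNReal.ofReal (v / 3 * ‖x‖⁻¹ ^ 2 * Real.log ‖x‖)
      ≤ ∫⁻ y in {y : E3 | 1 < ‖y‖}, ENNReal.ofReal ((‖x - y‖ ^ 2)⁻¹ * (‖y‖ ^ 3)⁻¹) := by
  set R := ‖x‖ with hR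
  have hR0 : 0 < R := lt_of_lt_of_le two_pos hx
  set A : Set E3 := {y | ‖y‖ ∈ Set.Ioo 2 (2*R)} with hA
  have hAmeas : MeasurableSet A :=
    measurable_norm measurableSet_Ioo
  have hAS : A ⊆ {y : E3 | 1 < ‖y‖} := fun y hy => lt_trans one_lt_two hy.1
  have step2 : ∫⁻ y in A, ENNReal.ofReal ((9*R^2)⁻¹ * (‖y‖^3)⁻¹)
      ≤ ∫⁻ y in A, ENNReal.ofReal ((‖x - y‖ ^ 2)⁻¹ * (‖y‖ ^ 3)⁻¹) := by
    apply lintegral_mono_ae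
    have h1 : ∀ᵐ y : E3 ∂(volume.restrict A), y ∈ A := ae_restrict_mem hAmeas
    have hx0 : (volume : Measure E3) {x} = 0 := measure_singleton x
    have h2 : ∀ᵐ y : E3 ∂(volume.restrict A), y ≠ x :=
      ae_restrict_of_ae (by simp [ae_iff, Set.setOf_eq_eq_singleton, hx0, Classical.not_not])
    filter_upwards [h1, h2] with y hyA hyx
    apply ENNReal.ofReal_le_ofReal
    have hxy0 : 0 < ‖x - y‖ := by
      rw [norm_sub_pos_iff]
      exact hyx.symm
    have hxy : ‖x - y‖ ≤ 3 * R := by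
      calc ‖x - y‖ ≤ ‖x‖ + ‖y‖ := norm_sub_le x y
        _ ≤ R + 2*R := by
            have := hyA.2.le
            linarith [hyA.2.le]
        _ = 3 * R := by ring
    have hsq : ‖x - y‖ ^ 2 ≤ 9 * R ^ 2 := by
      nlinarith [hxy0.le]
    have hinv : (9*R^2)⁻¹ ≤ (‖x - y‖ ^ 2)⁻¹ := by
      apply inv_anti₀ (by positivity) hsq
    exact mul_le_mul_of_nonneg_right hinv (by positivity)
  have step3 : ∫⁻ y in A, ENNReal.ofReal ((9*R^2)⁻¹ * (‖y‖^3)⁻¹)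
      = ENNReal.ofReal ((9*R^2)⁻¹) * ENNReal.ofReal (3 * v * Real.log R) := by
    rw [lint_const_mul_ofReal (by positivity : (0:ℝ) ≤ (9*R^2)⁻¹) (g := fun y : E3 => (‖y‖ ^ 3)⁻¹) ((measurable_norm.pow_const 3).inv)]
    congr 1
    have h2R : (2:ℝ) < 2*R := by linarith
    rw [hA, lint_annulus two_pos h2R]
    rw [Real.log_mul two_ne_zero hR0.ne']
    rw [show Real.log 2 + Real.log R - Real.log 2 = Real.log R by ring]
    exact three_Vb_ofReal (Real.log_nonneg (by linarith))
  calc ENNReal.ofReal (v / 3 * R⁻¹ ^ 2 * Real.log R)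
      = ENNReal.ofReal ((9*R^2)⁻¹) * ENNReal.ofReal (3 * v * Real.log R) := by
        rw [← ENNReal.ofReal_mul (by positivity)]
        congr 1
        have hlog : 0 ≤ Real.log R := Real.log_nonneg (by linarith)
        rw [inv_pow]
        field_simp
        ring
    _ = ∫⁻ y in A, ENNReal.ofReal ((9*R^2)⁻¹ * (‖y‖^3)⁻¹) := step3.symm
    _ ≤ ∫⁻ y in A, ENNReal.ofReal ((‖x - y‖ ^ 2)⁻¹ * (‖y‖ ^ 3)⁻¹) := step2
    _ ≤ _ := lintegral_mono_set hAS

lemma upper_bound (x : E3) (hx : 2 ≤ ‖x‖) :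
    ∫⁻ y in {y : E3 | 1 < ‖y‖}, ENNReal.ofReal ((‖x - y‖ ^ 2)⁻¹ * (‖y‖ ^ 3)⁻¹)
      ≤ ENNReal.ofReal (50 * v * (‖x‖⁻¹ ^ 2 * Real.log ‖x‖)) := by
  set R := ‖x‖ with hRdef
  have hR0 : 0 < R := lt_of_lt_of_le two_pos hx
  have hlog2 : Real.log 2 ≤ Real.log R := Real.log_le_log two_pos hx
  have hlog2pos : (0.6931471803 : ℝ) < Real.log 2 := Real.log_two_gt_d9
  have hlogR : 0 < Real.log R := lt_of_lt_of_le (by linarith) hlog2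
  set P₁ : Set E3 := ball x (R/2) with hP₁
  set P₂ : Set E3 := {y : E3 | ‖y‖ ∈ Set.Ioo 1 (2*R)} \ ball x (R/2) with hP₂
  set P₃ : Set E3 := {y : E3 | ‖y‖ ∈ Set.Ici (2*R)} with hP₃
  have hcover : {y : E3 | 1 < ‖y‖} ⊆ (P₁ ∪ P₂) ∪ P₃ := by
    intro y hy
    by_cases h3 : 2*R ≤ ‖y‖
    · exact Or.inr h3
    · left
      by_cases h1 : y ∈ ball x (R/2)
      · exact Or.inl h1
      · exact Or.inr ⟨⟨hy, lt_of_not_ge h3⟩, h1⟩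
  have hgmeas : Measurable fun y : E3 => (‖x - y‖ ^ 2)⁻¹ :=
    ((measurable_id'.const_sub x).norm.pow_const 2).inv
  have hnmeas3 : Measurable fun y : E3 => (‖y‖ ^ 3)⁻¹ := (measurable_norm.pow_const 3).inv
  have hnmeas5 : Measurable fun y : E3 => (‖y‖ ^ 5)⁻¹ := (measurable_norm.pow_const 5).inv
  -- Piece 1
  have hI1 : ∫⁻ y in P₁, ENNReal.ofReal ((‖x - y‖ ^ 2)⁻¹ * (‖y‖ ^ 3)⁻¹)
      ≤ ENNReal.ofReal (((R/2)^3)⁻¹ * (3 * v * (R/2))) := by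
    have e1 : ∫⁻ y in P₁, ENNReal.ofReal ((‖x - y‖ ^ 2)⁻¹ * (‖y‖ ^ 3)⁻¹)
        ≤ ∫⁻ y in P₁, ENNReal.ofReal (((R/2)^3)⁻¹ * (‖x - y‖ ^ 2)⁻¹) := by
      apply lintegral_mono_ae
      filter_upwards [ae_restrict_mem measurableSet_ball] with y hy
      apply ENNReal.ofReal_le_ofReal
      have hdy : ‖x - y‖ < R/2 := by
        rw [← dist_eq_norm]
        exact mem_ball'.1 hy
      have hyn : R/2 ≤ ‖y‖ := by
        have h := norm_add_le (x - y) y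
        rw [sub_add_cancel] at h
        linarith
      have hcube : (‖y‖ ^ 3)⁻¹ ≤ ((R/2)^3)⁻¹ := by
        apply inv_anti₀ (by positivity)
        exact pow_le_pow_left₀ (by positivity) hyn 3
      calc (‖x - y‖ ^ 2)⁻¹ * (‖y‖ ^ 3)⁻¹
          ≤ (‖x - y‖ ^ 2)⁻¹ * ((R/2)^3)⁻¹ :=
            mul_le_mul_of_nonneg_left hcube (by positivity)
        _ = ((R/2)^3)⁻¹ * (‖x - y‖ ^ 2)⁻¹ := mul_comm _ _
    have e2 : ∫⁻ y in P₁, ENNReal.ofReal (((R/2)^3)⁻¹ * (‖x - y‖ ^ 2)⁻¹)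
        = ENNReal.ofReal (((R/2)^3)⁻¹) * (3 * Vb * ENNReal.ofReal (R/2)) := by
      rw [lint_const_mul_ofReal (by positivity : (0:ℝ) ≤ ((R/2)^3)⁻¹) hgmeas,
        lint_ball x (by positivity : (0:ℝ) ≤ R/2)]
    calc ∫⁻ y in P₁, ENNReal.ofReal ((‖x - y‖ ^ 2)⁻¹ * (‖y‖ ^ 3)⁻¹)
        ≤ ∫⁻ y in P₁, ENNReal.ofReal (((R/2)^3)⁻¹ * (‖x - y‖ ^ 2)⁻¹) := e1
      _ = ENNReal.ofReal (((R/2)^3)⁻¹) * (3 * Vb * ENNReal.ofReal (R/2)) := e2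
      _ = ENNReal.ofReal (((R/2)^3)⁻¹ * (3 * v * (R/2))) := by
          rw [three_Vb_ofReal (by positivity : (0:ℝ) ≤ R/2),
            ← ENNReal.ofReal_mul (by positivity)]
  -- Piece 2
  have hI2 : ∫⁻ y in P₂, ENNReal.ofReal ((‖x - y‖ ^ 2)⁻¹ * (‖y‖ ^ 3)⁻¹)
      ≤ ENNReal.ofReal (((R/2)^2)⁻¹ * (3 * v * (Real.log 2 + Real.log R))) := by
    have hP₂meas : MeasurableSet P₂ :=
      (measurable_norm measurableSet_Ioo).diff measurableSet_ball
    have e3 : ∫⁻ y in P₂, ENNReal.ofReal ((‖x - y‖ ^ 2)⁻¹ * (‖y‖ ^ 3)⁻¹)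
        ≤ ∫⁻ y in P₂, ENNReal.ofReal (((R/2)^2)⁻¹ * (‖y‖ ^ 3)⁻¹) := by
      apply lintegral_mono_ae
      filter_upwards [ae_restrict_mem hP₂meas] with y hy
      apply ENNReal.ofReal_le_ofReal
      have hdy : R/2 ≤ ‖x - y‖ := by
        have h := hy.2
        rw [mem_ball] at h
        push_neg at h
        rwa [dist_eq_norm, norm_sub_rev] at h
      have hinv2 : (‖x - y‖ ^ 2)⁻¹ ≤ ((R/2)^2)⁻¹ := by
        apply inv_anti₀ (by positivity)
        exact pow_le_pow_left₀ (by positivity) hdy 2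
      exact mul_le_mul_of_nonneg_right hinv2 (by positivity)
    have e4 : ∫⁻ y in P₂, ENNReal.ofReal (((R/2)^2)⁻¹ * (‖y‖ ^ 3)⁻¹)
        ≤ ∫⁻ y in {y : E3 | ‖y‖ ∈ Set.Ioo 1 (2*R)},
            ENNReal.ofReal (((R/2)^2)⁻¹ * (‖y‖ ^ 3)⁻¹) :=
      lintegral_mono_set diff_subset
    have e5 : ∫⁻ y in {y : E3 | ‖y‖ ∈ Set.Ioo 1 (2*R)},
          ENNReal.ofReal (((R/2)^2)⁻¹ * (‖y‖ ^ 3)⁻¹)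
        = ENNReal.ofReal (((R/2)^2)⁻¹ * (3 * v * (Real.log 2 + Real.log R))) := by
      rw [lint_const_mul_ofReal (by positivity : (0:ℝ) ≤ ((R/2)^2)⁻¹) hnmeas3,
        lint_annulus one_pos (by linarith : (1:ℝ) < 2*R),
        Real.log_mul two_ne_zero hR0.ne', Real.log_one, sub_zero,
        three_Vb_ofReal (by positivity), ← ENNReal.ofReal_mul (by positivity)]
    exact le_trans e3 (le_trans e4 (le_of_eq e5))
  -- Piece 3
  have hI3 : ∫⁻ y in P₃, ENNReal.ofReal ((‖x - y‖ ^ 2)⁻¹ * (‖y‖ ^ 3)⁻¹)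
      ≤ ENNReal.ofReal (4 * (3 * v * (((2*R)^2)⁻¹/2))) := by
    have hP₃meas : MeasurableSet P₃ := measurable_norm measurableSet_Ici
    have e6 : ∫⁻ y in P₃, ENNReal.ofReal ((‖x - y‖ ^ 2)⁻¹ * (‖y‖ ^ 3)⁻¹)
        ≤ ∫⁻ y in P₃, ENNReal.ofReal (4 * (‖y‖ ^ 5)⁻¹) := by
      apply lintegral_mono_ae
      filter_upwards [ae_restrict_mem hP₃meas] with y hy
      apply ENNReal.ofReal_le_ofReal
      have hy2R : 2*R ≤ ‖y‖ := hy
      have hy0 : 0 < ‖y‖ := by linarith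
      have hhalf : ‖y‖/2 ≤ ‖x - y‖ := by
        have h := norm_sub_norm_le y x
        rw [norm_sub_rev] at h
        linarith
      have h2 : (‖x - y‖ ^ 2)⁻¹ ≤ ((‖y‖/2) ^ 2)⁻¹ := by
        apply inv_anti₀ (by positivity)
        exact pow_le_pow_left₀ (by positivity) hhalf 2
      calc (‖x - y‖ ^ 2)⁻¹ * (‖y‖ ^ 3)⁻¹
          ≤ ((‖y‖/2) ^ 2)⁻¹ * (‖y‖ ^ 3)⁻¹ :=
            mul_le_mul_of_nonneg_right h2 (by positivity)
        _ = 4 * (‖y‖ ^ 5)⁻¹ := by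
            field_simp
            ring
    have e7 : ∫⁻ y in P₃, ENNReal.ofReal (4 * (‖y‖ ^ 5)⁻¹)
        = ENNReal.ofReal (4 * (3 * v * (((2*R)^2)⁻¹/2))) := by
      rw [lint_const_mul_ofReal (by norm_num : (0:ℝ) ≤ 4) hnmeas5,
        lint_tail (by linarith : (0:ℝ) < 2*R),
        three_Vb_ofReal (by positivity), ← ENNReal.ofReal_mul (by norm_num)]
    exact le_trans e6 (le_of_eq e7)
  -- combine
  have htotal : ∫⁻ y in {y : E3 | 1 < ‖y‖}, ENNReal.ofReal ((‖x - y‖ ^ 2)⁻¹ * (‖y‖ ^ 3)⁻¹)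
      ≤ ENNReal.ofReal (((R/2)^3)⁻¹ * (3 * v * (R/2)))
        + ENNReal.ofReal (((R/2)^2)⁻¹ * (3 * v * (Real.log 2 + Real.log R)))
        + ENNReal.ofReal (4 * (3 * v * (((2*R)^2)⁻¹/2))) := by
    calc ∫⁻ y in {y : E3 | 1 < ‖y‖}, ENNReal.ofReal ((‖x - y‖ ^ 2)⁻¹ * (‖y‖ ^ 3)⁻¹)
        ≤ ∫⁻ y in (P₁ ∪ P₂) ∪ P₃, ENNReal.ofReal ((‖x - y‖ ^ 2)⁻¹ * (‖y‖ ^ 3)⁻¹) :=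
          lintegral_mono_set hcover
      _ ≤ (∫⁻ y in P₁ ∪ P₂, ENNReal.ofReal ((‖x - y‖ ^ 2)⁻¹ * (‖y‖ ^ 3)⁻¹))
            + ∫⁻ y in P₃, ENNReal.ofReal ((‖x - y‖ ^ 2)⁻¹ * (‖y‖ ^ 3)⁻¹) :=
          lintegral_union_le _ _ _
      _ ≤ ((∫⁻ y in P₁, ENNReal.ofReal ((‖x - y‖ ^ 2)⁻¹ * (‖y‖ ^ 3)⁻¹))
            + ∫⁻ y in P₂, ENNReal.ofReal ((‖x - y‖ ^ 2)⁻¹ * (‖y‖ ^ 3)⁻¹))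
            + ∫⁻ y in P₃, ENNReal.ofReal ((‖x - y‖ ^ 2)⁻¹ * (‖y‖ ^ 3)⁻¹) :=
          add_le_add_left (lintegral_union_le _ _ _) _
      _ ≤ _ := add_le_add (add_le_add hI1 hI2) hI3
  refine le_trans htotal ?_
  have hv3 : (0:ℝ) ≤ 3 * v := mul_nonneg (by norm_num) v_nonneg
  have hlogs : (0:ℝ) ≤ Real.log 2 + Real.log R := by linarith
  have b1 : (0:ℝ) ≤ ((R/2)^3)⁻¹ * (3 * v * (R/2)) :=
    mul_nonneg (by positivity) (mul_nonneg hv3 (by positivity))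
  have b2 : (0:ℝ) ≤ ((R/2)^2)⁻¹ * (3 * v * (Real.log 2 + Real.log R)) :=
    mul_nonneg (by positivity) (mul_nonneg hv3 hlogs)
  have b3 : (0:ℝ) ≤ 4 * (3 * v * (((2*R)^2)⁻¹/2)) :=
    mul_nonneg (by norm_num) (mul_nonneg hv3 (by positivity))
  rw [← ENNReal.ofReal_add b1 b2, ← ENNReal.ofReal_add (by linarith) b3]
  apply ENNReal.ofReal_le_ofReal
  have hkey : ((R/2)^3)⁻¹ * (3 * v * (R/2)) + ((R/2)^2)⁻¹ * (3 * v * (Real.log 2 + Real.log R))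
      + 4 * (3 * v * (((2*R)^2)⁻¹/2))
      = (27/2 * v + 12 * v * Real.log 2 + 12 * v * Real.log R) / R^2 := by
    field_simp
    ring
  have htarget : 50 * v * (R⁻¹ ^ 2 * Real.log R) = (50 * v * Real.log R) / R^2 := by
    rw [inv_pow]
    field_simp
  rw [hkey, htarget]
  apply div_le_div_of_nonneg_right ?_ (by positivity)
  nlinarith [mul_nonneg v_nonneg (sub_nonneg.2 hlog2), v_nonneg,
    mul_nonneg v_nonneg (le_of_lt (lt_trans (by norm_num : (0:ℝ) < 0.6931471803) hlog2pos))]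

end InteractionAux

open InteractionAux

/-- The integral `D(x) = ∫_{|y|>1} |x−y|⁻² |y|⁻³ dy` behaves like `|x|⁻² log|x|`
for `|x| ≥ 2`. -/
theorem interaction_integral_log_growth :
    ∃ c₁ c₂ : ℝ, 0 < c₁ ∧ c₁ ≤ c₂ ∧ ∀ x : E3, 2 ≤ ‖x‖ →
      c₁ * ‖x‖⁻¹ ^ 2 * Real.log ‖x‖
          ≤ (∫ y in {y : E3 | 1 < ‖y‖}, (‖x - y‖ ^ 2)⁻¹ * (‖y‖ ^ 3)⁻¹) ∧
      (∫ y in {y : E3 | 1 < ‖y‖}, (‖x - y‖ ^ 2)⁻¹ * (‖y‖ ^ 3)⁻¹)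
          ≤ c₂ * ‖x‖⁻¹ ^ 2 * Real.log ‖x‖ := by
  refine ⟨v / 3, 50 * v, div_pos v_pos (by norm_num), ?_, fun x hx => ?_⟩
  · nlinarith [v_pos]
  have hx1 : (1:ℝ) ≤ ‖x‖ := by linarith
  have hlog : 0 ≤ Real.log ‖x‖ := Real.log_nonneg hx1
  set L : ℝ≥0∞ := ∫⁻ y in {y : E3 | 1 < ‖y‖},
    ENNReal.ofReal ((‖x - y‖ ^ 2)⁻¹ * (‖y‖ ^ 3)⁻¹) with hL
  have hub := upper_bound x hx
  have hlb := lower_bound x hx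
  have hLne : L ≠ ⊤ := (lt_of_le_of_lt hub ENNReal.ofReal_lt_top).ne
  have hnn : 0 ≤ᵐ[volume.restrict {y : E3 | 1 < ‖y‖}]
      fun y : E3 => (‖x - y‖ ^ 2)⁻¹ * (‖y‖ ^ 3)⁻¹ :=
    ae_of_all _ fun y => by positivity
  have heq : (∫ y in {y : E3 | 1 < ‖y‖}, (‖x - y‖ ^ 2)⁻¹ * (‖y‖ ^ 3)⁻¹) = L.toReal := by
    rw [integral_eq_lintegral_of_nonneg_ae hnn (fmeas x).aestronglyMeasurable]
  constructor
  · rw [heq]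
    have h0 : (0:ℝ) ≤ v / 3 * ‖x‖⁻¹ ^ 2 * Real.log ‖x‖ :=
      mul_nonneg (mul_nonneg (div_nonneg v_nonneg (by norm_num)) (by positivity)) hlog
    calc v / 3 * ‖x‖⁻¹ ^ 2 * Real.log ‖x‖
        = (ENNReal.ofReal (v / 3 * ‖x‖⁻¹ ^ 2 * Real.log ‖x‖)).toReal :=
          (ENNReal.toReal_ofReal h0).symm
      _ ≤ L.toReal := ENNReal.toReal_mono hLne hlb
  · rw [heq]
    have h0 : (0:ℝ) ≤ 50 * v * (‖x‖⁻¹ ^ 2 * Real.log ‖x‖) :=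
      mul_nonneg (mul_nonneg (by norm_num) v_nonneg) (mul_nonneg (by positivity) hlog)
    calc L.toReal
        ≤ (ENNReal.ofReal (50 * v * (‖x‖⁻¹ ^ 2 * Real.log ‖x‖))).toReal :=
          ENNReal.toReal_mono ENNReal.ofReal_ne_top hub
      _ = 50 * v * (‖x‖⁻¹ ^ 2 * Real.log ‖x‖) := ENNReal.toReal_ofReal h0
      _ = 50 * v * ‖x‖⁻¹ ^ 2 * Real.log ‖x‖ := by ring
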